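/- Let G = (S ∪ K, E) be a split graph with no isolated vertices, where S is an independent set, K is a clique, and K is a maximum clique of G with |K| = q = ω(G). Let π = {V_1, V_2, ..., V_p} be a total transitive partition of G. Then there exists a subset K' ⊆ K such that K' dominates S (every vertex of S is adjacent to a vertex of K'), all vertices of K' belong to V_1, and 1 ≤ |K'| ≤ q - p + 1. -/
import Mathlib


/-- A total transitive partition of `G` into `k` parts: the parts are nonempty, they
partition the vertex set, and `V_i` dominates `V_j` for all `i ≤ j`. -/
def TTPartition {V : Type*} (G : SimpleGraph V) (k : ℕ) (P : Fin k → Set V) : Prop :=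
  (∀ i, (P i).Nonempty) ∧
  (∀ v : V, ∃! i, v ∈ P i) ∧
  (∀ i j : Fin k, i ≤ j → ∀ v ∈ P j, ∃ u ∈ P i, G.Adj u v)

/-- For a split graph `G` (with `K` a maximum clique of size `q`) and a total transitive
partition `{V_1, …, V_p}` of `G` (with `1 ≤ p ≤ q - 1`), there exists `K' ⊆ K`
dominating `S`, contained in `V_1`, with `1 ≤ |K'| ≤ q - p + 1`. -/
theorem stmt15 {V : Type*} [Fintype V] (G : SimpleGraph V)
    (S K : Set V) (hdisj : Disjoint S K) (hcover : S ∪ K = Set.univ)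
    (hS : ∀ u ∈ S, ∀ v ∈ S, ¬ G.Adj u v)
    (hK : G.IsClique K)
    (hmax : ∀ C : Set V, G.IsClique C → C.ncard ≤ K.ncard)
    (hiso : ∀ v : V, ∃ u : V, G.Adj v u)
    (q : ℕ) (hq : q = K.ncard)
    (p : ℕ) (hp1 : 1 ≤ p) (hpq : p ≤ q - 1)
    (P : Fin p → Set V) (hP : TTPartition G p P) :
    ∃ K' : Set V, K' ⊆ K ∧ (∀ s ∈ S, ∃ t ∈ K', G.Adj t s) ∧
      K' ⊆ P ⟨0, hp1⟩ ∧ 1 ≤ K'.ncard ∧ K'.ncard ≤ q - p + 1 := by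
  classical
  obtain ⟨hne, huniq, hdom⟩ := hP
  set z : Fin p := ⟨0, hp1⟩ with hz
  -- not in S implies in K
  have hSK : ∀ v : V, v ∉ S → v ∈ K := by
    intro v hv
    have : v ∈ S ∪ K := by rw [hcover]; trivial
    rcases this with h | h
    · exact absurd h hv
    · exact h
  -- every part contains a clique vertex
  have hKmem : ∀ i : Fin p, ∃ v, v ∈ P i ∧ v ∈ K := by
    intro i
    obtain ⟨v, hv⟩ := hne i
    obtain ⟨u, hu, hadj⟩ := hdom i i le_rfl v hv
    by_cases hvS : v ∈ S
    · refine ⟨u, hu, hSK u ?_⟩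
      intro huS
      exact hS u huS v hvS hadj
    · exact ⟨v, hv, hSK v hvS⟩
  -- parts are pairwise disjoint
  have hpd : ∀ i j : Fin p, ∀ v, v ∈ P i → v ∈ P j → i = j := by
    intro i j v hi hj
    obtain ⟨k, _, hk⟩ := huniq v
    rw [hk i hi, hk j hj]
  choose f hf1 hf2 using hKmem
  have hfinj : Function.Injective f := by
    intro i j hij
    exact hpd i j (f i) (hf1 i) (hij ▸ hf1 j)
  refine ⟨K ∩ P z, Set.inter_subset_left, ?_, Set.inter_subset_right, ?_, ?_⟩
  · -- domination of S
    intro s hs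
    obtain ⟨j, hj, _⟩ := huniq s
    obtain ⟨u, hu, hadj⟩ := hdom z j (by exact Fin.mk_le_of_le_val (Nat.zero_le _)) s hj
    refine ⟨u, ⟨hSK u ?_, hu⟩, hadj⟩
    intro huS
    exact hS u huS s hs hadj
  · -- at least one vertex
    rw [Nat.one_le_iff_ne_zero, ← Nat.pos_iff_ne_zero, Set.ncard_pos (Set.toFinite _)]
    exact ⟨f z, hf2 z, hf1 z⟩
  · -- cardinality bound
    set T : Set V := f '' {i | i ≠ z} with hT
    have hTK : T ⊆ K := by
      rintro v ⟨i, _, rfl⟩; exact hf2 i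
    have hdisjT : Disjoint (K ∩ P z) T := by
      rw [Set.disjoint_left]
      rintro v ⟨_, hvz⟩ ⟨i, hi, rfl⟩
      exact hi (hpd i z (f i) (hf1 i) hvz)
    have hTcard : T.ncard = p - 1 := by
      rw [hT, Set.ncard_image_of_injective _ hfinj]
      have : ({i : Fin p | i ≠ z} : Set (Fin p)) = {z}ᶜ := rfl
      rw [this]
      have h1 : ({z} : Set (Fin p)).ncard + ({z}ᶜ : Set (Fin p)).ncard = p := by
        rw [Set.ncard_add_ncard_compl]
        simp [Nat.card_eq_fintype_card]
      have h2 : ({z} : Set (Fin p)).ncard = 1 := Set.ncard_singleton z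
      omega
    have hsub : (K ∩ P z) ∪ T ⊆ K := Set.union_subset Set.inter_subset_left hTK
    have hle : ((K ∩ P z) ∪ T).ncard ≤ K.ncard :=
      Set.ncard_le_ncard hsub (Set.toFinite _)
    rw [Set.ncard_union_eq hdisjT (Set.toFinite _) (Set.toFinite _), hTcard] at hle
    have hKpos : 0 < K.ncard := (Set.ncard_pos (Set.toFinite _)).mpr ⟨f z, hf2 z⟩
    omega
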